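/- arXiv:1710.08775 — 2 statements merged into one kernel-verified Lean document; each statement's English description precedes it below -/
import Mathlib

section
/- The moralization of a HEDG equals the marginalization of the moralization of its augmented graph: for a HEDG G=(V,E,H), G^moral = ((G^aug)^moral)^{marg}, where the marginalization is with respect to the set of auxiliary nodes {e_F | F maximal in H}. -/
namespace HedgPaper

variable {V : Type*}

/-- directed reachability: existence of a directed path (possibly trivial). -/
def Reach (E : V → V → Prop) : V → V → Prop := Relation.ReflTransGen E

/-- `v` and `w` lie in the same strongly connected component. -/
def InSC (E : V → V → Prop) (v w : V) : Prop := Reach E v w ∧ Reach E w v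

/-- the set of ancestors of a set `Z`. -/
def AncSet (E : V → V → Prop) (Z : Set V) : Set V := {v | ∃ z ∈ Z, Reach E v z}

/-- `H` is a simplicial complex over `V`. -/
def IsSimplicial (H : Set (Set V)) : Prop :=
  (∀ v : V, ({v} : Set V) ∈ H) ∧ ∀ F ∈ H, ∀ F' : Set V, F' ⊆ F → F' ∈ H

/-- direction of an edge on a path: forward, backward, or bidirected. -/
inductive EDir : Type
  | fwd | bwd | bi

/-- one step of a walk in a HEDG. -/
structure Step (V : Type*) where
  src : V
  dir : EDir
  dst : V

/-- the step is an actual (directed or bidirected) edge of the HEDG `(V,E,H)`. -/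
def Step.Valid (E : V → V → Prop) (H : Set (Set V)) (s : Step V) : Prop :=
  match s.dir with
  | .fwd => E s.src s.dst
  | .bwd => E s.dst s.src
  | .bi  => s.src ≠ s.dst ∧ ({s.src, s.dst} : Set V) ∈ H

/-- the step has an arrowhead at its destination. -/
def Step.HeadAtDst (s : Step V) : Prop := s.dir = EDir.fwd ∨ s.dir = EDir.bi

/-- the step has an arrowhead at its source. -/
def Step.HeadAtSrc (s : Step V) : Prop := s.dir = EDir.bwd ∨ s.dir = EDir.bi

/-- `l` is a walk (path, possibly with repeated nodes) from `x` to `y` in `(V,E,H)`. -/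
def IsWalk (E : V → V → Prop) (H : Set (Set V)) : List (Step V) → V → V → Prop
  | [], x, y => x = y
  | s :: l, x, y => s.src = x ∧ s.Valid E H ∧ IsWalk E H l s.dst y

/-- all interior nodes of the walk are `Z`-open in the d-separation sense:
colliders are ancestors of `Z`, non-colliders are not in `Z`. -/
def DInteriorOpen (E : V → V → Prop) (Z : Set V) : List (Step V) → Prop
  | [] => True
  | [_] => True
  | s :: t :: l =>
      ((s.HeadAtDst ∧ t.HeadAtSrc) → s.dst ∈ AncSet E Z) ∧
      (¬ (s.HeadAtDst ∧ t.HeadAtSrc) → s.dst ∉ Z) ∧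
      DInteriorOpen E Z (t :: l)

/-- `X` is d-separated from `Y` given `Z` in the HEDG `(V,E,H)`:
every walk from `X` to `Y` is `Z`-blocked. -/
def DSep (E : V → V → Prop) (H : Set (Set V)) (X Y Z : Set V) : Prop :=
  ∀ x ∈ X, ∀ y ∈ Y, ∀ l : List (Step V),
    IsWalk E H l x y → ¬ (x ∉ Z ∧ y ∉ Z ∧ DInteriorOpen E Z l)

/-- all interior nodes of the walk are `Z`-σ-open: colliders are ancestors of `Z`,
and a non-collider in `Z` must not point (via a directed edge of the path) to a
node outside of its strongly connected component. -/
def SigmaInteriorOpen (E : V → V → Prop) (Z : Set V) : List (Step V) → Prop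
  | [] => True
  | [_] => True
  | s :: t :: l =>
      ((s.HeadAtDst ∧ t.HeadAtSrc) → s.dst ∈ AncSet E Z) ∧
      (¬ (s.HeadAtDst ∧ t.HeadAtSrc) →
        ¬ (s.dst ∈ Z ∧ ((¬ s.HeadAtDst ∧ ¬ InSC E s.dst s.src) ∨
                        (¬ t.HeadAtSrc ∧ ¬ InSC E s.dst t.dst)))) ∧
      SigmaInteriorOpen E Z (t :: l)

/-- `X` is σ-separated from `Y` given `Z` in the HEDG `(V,E,H)`. -/
def SigmaSep (E : V → V → Prop) (H : Set (Set V)) (X Y Z : Set V) : Prop :=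
  ∀ x ∈ X, ∀ y ∈ Y, ∀ l : List (Step V),
    IsWalk E H l x y → ¬ (x ∉ Z ∧ y ∉ Z ∧ SigmaInteriorOpen E Z l)

/-- directed edges of the marginalization of `(V,E,H)` w.r.t. (i.e. after removing) `U`:
`a → b` iff there is a directed path `a → u₁ → ⋯ → u_r → b` in `G` with all `uᵢ ∈ U`. -/
def MargE (E : V → V → Prop) (U : Set V) : V → V → Prop :=
  fun a b => a ∉ U ∧ b ∉ U ∧
    ∃ c, Relation.ReflTransGen (fun x y => E x y ∧ y ∈ U) a c ∧ E c b

/-- hyperedges of the marginalization of `(V,E,H)` w.r.t. `U`. -/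
def MargH (E : V → V → Prop) (H : Set (Set V)) (U : Set V) : Set (Set V) :=
  {F' | (∀ v ∈ F', v ∉ U) ∧ ∃ F ∈ H, F ⊆ F' ∪ U ∧
    ∀ v ∈ F', (v ∈ F ∧ v ∉ U) ∨
      ∃ u ∈ F ∩ U, ∃ c, Relation.ReflTransGen (fun x y => E x y ∧ y ∈ U) u c ∧ E c v}

/-- bidirected-edge relation induced by the hyperedges. -/
def BiRel (H : Set (Set V)) : V → V → Prop :=
  fun x y => x ≠ y ∧ ({x, y} : Set V) ∈ H

/-- (generalized) moralization of a HEDG: `v — w` iff there are `a`, `b` with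
`v ∈ {a} ∪ Pa(a)`, `w ∈ {b} ∪ Pa(b)` and a bidirected chain `a ↔ ⋯ ↔ b`. -/
def MoralE (E : V → V → Prop) (H : Set (Set V)) : V → V → Prop :=
  fun v w => v ≠ w ∧ ∃ a b, (v = a ∨ E v a) ∧ (w = b ∨ E w b) ∧
    Relation.ReflTransGen (BiRel H) a b

/-- moralization of a directed graph: undirected versions of the directed edges plus
edges between distinct parents of a common child. -/
def MoralDirE (E : V → V → Prop) : V → V → Prop :=
  fun v w => v ≠ w ∧ (E v w ∨ E w v ∨ ∃ c, E v c ∧ E w c)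

/-- marginalization of an undirected graph `A` w.r.t. `W`: `a — b` iff there is a path
from `a` to `b` with all intermediate nodes in `W`. -/
def MargUnd (A : V → V → Prop) (W : Set V) : V → V → Prop :=
  fun a b => a ∉ W ∧ b ∉ W ∧ a ≠ b ∧
    ∃ c, Relation.ReflTransGen (fun x y => A x y ∧ y ∈ W) a c ∧ A c b

/-- separation in an undirected graph: every path from `X` to `Y` contains a node of
`Z` (including the endnodes). -/
def USep (A : V → V → Prop) (X Y Z : Set V) : Prop :=
  ∀ x ∈ X, ∀ y ∈ Y,
    ¬ (x ∉ Z ∧ Relation.ReflTransGen (fun a b => A a b ∧ b ∉ Z) x y)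

/-- edges of the induced sub-HEDG on `A`. -/
def InducedE (E : V → V → Prop) (A : Set V) : V → V → Prop :=
  fun a b => a ∈ A ∧ b ∈ A ∧ E a b

/-- hyperedges of the induced sub-HEDG on `A`. -/
def InducedH (H : Set (Set V)) (A : Set V) : Set (Set V) := {F | F ∈ H ∧ F ⊆ A}

/-- `F` is an inclusion-maximal hyperedge of `H`. -/
def MaximalHyperedge (H : Set (Set V)) (F : Set V) : Prop :=
  F ∈ H ∧ ∀ F' ∈ H, F ⊆ F' → F' = F

/-- edges of the augmented directed graph of a HEDG: the original directed edges plus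
`e_F → v` for every maximal hyperedge `F` and every `v ∈ F`. -/
def AugE (E : V → V → Prop) (H : Set (Set V)) :
    V ⊕ {F : Set V // MaximalHyperedge H F} →
    V ⊕ {F : Set V // MaximalHyperedge H F} → Prop
  | .inl v, .inl w => E v w
  | .inr F, .inl v => v ∈ F.1
  | _, _ => False

/-- the trivial simplicial complex (only subsingleton hyperedges), making a directed
graph a HEDG without bidirected edges. -/
def TrivialH (W : Type*) : Set (Set W) := {F | Set.Subsingleton F}

/-- directed edges of the acyclification of a HEDG. -/
def AcyE (E : V → V → Prop) : V → V → Prop :=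
  fun v w => ¬ InSC E v w ∧ ∃ w', InSC E w w' ∧ E v w'

/-- hyperedges of the acyclification of a HEDG. -/
def AcyH (E : V → V → Prop) (H : Set (Set V)) : Set (Set V) :=
  {F' | ∃ F ∈ H, ∀ x ∈ F', ∃ v ∈ F, InSC E v x}


section Aux

open Relation

variable {E : V → V → Prop} {H : Set (Set V)}

lemma exists_maximal_hyperedge [Fintype V] {F : Set V} (hF : F ∈ H) :
    ∃ M : Set V, MaximalHyperedge H M ∧ F ⊆ M := by
  obtain ⟨M, hM, hmax⟩ := Set.Finite.exists_maximalFor id {F' ∈ H | F ⊆ F'}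
    (Set.toFinite _) ⟨F, hF, subset_rfl⟩
  exact ⟨M, ⟨hM.1, fun F' hF' hsub => le_antisymm (hmax ⟨hF', hM.2.trans hsub⟩ hsub) hsub⟩, hM.2⟩

lemma chain_of_mem (hH : IsSimplicial H) {F : Set V} (hF : F ∈ H) {x y : V}
    (hx : x ∈ F) (hy : y ∈ F) : Relation.ReflTransGen (BiRel H) x y := by
  rcases eq_or_ne x y with rfl | hxy
  · exact ReflTransGen.refl
  · refine ReflTransGen.single ⟨hxy, hH.2 F hF _ ?_⟩
    intro z hz
    rcases hz with rfl | rfl <;> assumption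

lemma inr_step (M N : {F : Set V // MaximalHyperedge H F}) {c : V}
    (hcM : c ∈ M.1) (hcN : c ∈ N.1) :
    Relation.ReflTransGen (fun x y => MoralDirE (AugE E H) x y ∧ y ∈ Set.range Sum.inr)
      (Sum.inr M : V ⊕ {F : Set V // MaximalHyperedge H F}) (Sum.inr N) := by
  rcases eq_or_ne M N with rfl | hMN
  · exact ReflTransGen.refl
  · exact ReflTransGen.single
      ⟨⟨fun h => hMN (Sum.inr.inj h), Or.inr (Or.inr ⟨Sum.inl c, hcM, hcN⟩)⟩, ⟨N, rfl⟩⟩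

lemma chain_to_chain [Fintype V]
    (Mb : {F : Set V // MaximalHyperedge H F}) {b : V} (hb : b ∈ Mb.1) :
    ∀ {a : V}, Relation.ReflTransGen (BiRel H) a b →
      ∀ Ma : {F : Set V // MaximalHyperedge H F}, a ∈ Ma.1 →
      Relation.ReflTransGen (fun x y => MoralDirE (AugE E H) x y ∧ y ∈ Set.range Sum.inr)
        (Sum.inr Ma : V ⊕ {F : Set V // MaximalHyperedge H F}) (Sum.inr Mb) := by
  intro a hab
  induction hab using Relation.ReflTransGen.head_induction_on with
  | refl => intro Ma ha; exact inr_step Ma Mb ha hb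
  | head h _ ih =>
      intro Ma ha
      obtain ⟨hne, hmem⟩ := h
      obtain ⟨M, hM, hsub⟩ := exists_maximal_hyperedge hmem
      exact (inr_step Ma ⟨M, hM⟩ ha (hsub (by left; rfl))).trans
        (ih ⟨M, hM⟩ (hsub (by right; rfl)))

lemma chain_inv (hH : IsSimplicial H) {v : V} :
    ∀ {x : V ⊕ {F : Set V // MaximalHyperedge H F}},
      Relation.ReflTransGen (fun x y => MoralDirE (AugE E H) x y ∧ y ∈ Set.range Sum.inr)
        (Sum.inl v) x →
    x = Sum.inl v ∨ ∃ M : {F : Set V // MaximalHyperedge H F}, x = Sum.inr M ∧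
      ∃ a, (v = a ∨ E v a) ∧ ∃ c ∈ M.1, Relation.ReflTransGen (BiRel H) a c := by
  intro x hx
  induction hx with
  | refl => exact Or.inl rfl
  | tail _ hstep ih =>
      obtain ⟨hedge, N, rfl⟩ := hstep
      rcases ih with rfl | ⟨M, rfl, a, hva, c, hcM, hac⟩
      · -- edge from inl v to inr N
        rcases hedge.2 with h | h | ⟨ch, h1, h2⟩
        · exact absurd h (by exact fun h => h)
        · exact Or.inr ⟨N, rfl, v, Or.inl rfl, v, h, ReflTransGen.refl⟩
        · cases ch with
          | inl d => exact Or.inr ⟨N, rfl, d, Or.inr h1, d, h2, ReflTransGen.refl⟩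
          | inr F => exact absurd h1 (fun h => h)
      · -- edge from inr M to inr N
        rcases hedge.2 with h | h | ⟨ch, h1, h2⟩
        · exact absurd h (fun h => h)
        · exact absurd h (fun h => h)
        · cases ch with
          | inl d =>
              exact Or.inr ⟨N, rfl, a, hva, d, h2,
                hac.trans (chain_of_mem hH M.2.1 hcM h1)⟩
          | inr F => exact absurd h1 (fun h => h)

end Aux

open Relation in

/-- The moralization of a HEDG equals the marginalization (w.r.t. the
auxiliary hyperedge nodes) of the moralization of its augmented directed graph:
`G^moral = ((G^aug)^moral)^marg`. -/
theorem moralization_eq_marg_moral_augmented {V : Type*} [Fintype V]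
    (E : V → V → Prop) (H : Set (Set V)) (hH : IsSimplicial H) (v w : V) :
    MoralE E H v w ↔
      MargUnd (MoralDirE (AugE E H)) (Set.range Sum.inr) (Sum.inl v) (Sum.inl w) := by
  constructor
  · rintro ⟨hvw, a, b, hva, hwb, hab⟩
    obtain ⟨Ma, hMa, hsa⟩ := exists_maximal_hyperedge (hH.1 a)
    obtain ⟨Mb, hMb, hsb⟩ := exists_maximal_hyperedge (hH.1 b)
    have haMa : a ∈ Ma := hsa rfl
    have hbMb : b ∈ Mb := hsb rfl
    refine ⟨?_, ?_, ?_, Sum.inr ⟨Mb, hMb⟩, ?_, ?_⟩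
    · rintro ⟨F, hF⟩; exact Sum.inr_ne_inl hF
    · rintro ⟨F, hF⟩; exact Sum.inr_ne_inl hF
    · exact fun h => hvw (Sum.inl.inj h)
    · refine ReflTransGen.head ⟨⟨fun h => Sum.inl_ne_inr h, ?_⟩, ⟨⟨Ma, hMa⟩, rfl⟩⟩
        (chain_to_chain ⟨Mb, hMb⟩ hbMb hab ⟨Ma, hMa⟩ haMa)
      rcases hva with rfl | hva
      · exact Or.inr (Or.inl haMa)
      · exact Or.inr (Or.inr ⟨Sum.inl a, hva, haMa⟩)
    · refine ⟨fun h => Sum.inr_ne_inl h, ?_⟩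
      rcases hwb with rfl | hwb
      · exact Or.inl hbMb
      · exact Or.inr (Or.inr ⟨Sum.inl b, hbMb, hwb⟩)
  · rintro ⟨_, _, hne, c, hchain, hlast⟩
    have hvw : v ≠ w := fun h => hne (congrArg Sum.inl h)
    rcases chain_inv hH hchain with rfl | ⟨M, rfl, a, hva, c', hc'M, hac'⟩
    · rcases hlast.2 with h | h | ⟨ch, h1, h2⟩
      · exact ⟨hvw, w, w, Or.inr h, Or.inl rfl, ReflTransGen.refl⟩
      · exact ⟨hvw, v, v, Or.inl rfl, Or.inr h, ReflTransGen.refl⟩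
      · cases ch with
        | inl d => exact ⟨hvw, d, d, Or.inr h1, Or.inr h2, ReflTransGen.refl⟩
        | inr F => exact absurd h1 (fun h => h)
    · rcases hlast.2 with h | h | ⟨ch, h1, h2⟩
      · exact ⟨hvw, a, w, hva, Or.inl rfl,
          hac'.trans (chain_of_mem hH M.2.1 hc'M h)⟩
      · exact absurd h (fun h => h)
      · cases ch with
        | inl d => exact ⟨hvw, a, d, hva, Or.inr h2,
            hac'.trans (chain_of_mem hH M.2.1 hc'M h1)⟩
        | inr F => exact absurd h2 (fun h => h)

end HedgPaper
end

section
/- For any HEDG G=(V,E,H) and subsets X,Y,Z ⊆ V: X ⟂_G^d Y | Z if and only if X is separated from Y given Z in the moralization of the ancestral closure Anc^G(X∪Y∪Z). -/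
namespace HedgPaper

variable {V : Type*}

/-! ### Auxiliary machinery for the proof of Statement 8 -/

section Aux

variable {E : V → V → Prop} {H : Set (Set V)} {X Y Z A : Set V}

/-- collider pattern between two consecutive steps. -/
def Collider (s t : Step V) : Prop := s.HeadAtDst ∧ t.HeadAtSrc

/-- openness condition on a consecutive pair of steps (d-separation version). -/
def DCond (E : V → V → Prop) (Z : Set V) (s t : Step V) : Prop :=
  (Collider s t → s.dst ∈ AncSet E Z) ∧ (¬ Collider s t → s.dst ∉ Z)

/-- weak openness: colliders only need to lie in `A`. -/
def WCond (Z A : Set V) (s t : Step V) : Prop :=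
  (Collider s t → s.dst ∈ A) ∧ (¬ Collider s t → s.dst ∉ Z)

/-- a "bad" pair: a collider that is not an ancestor of `Z`. -/
def Bad (E : V → V → Prop) (Z : Set V) (s t : Step V) : Prop :=
  Collider s t ∧ s.dst ∉ AncSet E Z

lemma isWalk_nil_iff {x y : V} : IsWalk E H [] x y ↔ x = y := Iff.rfl

lemma isWalk_cons_iff {s : Step V} {l x y} :
    IsWalk E H (s :: l) x y ↔ s.src = x ∧ s.Valid E H ∧ IsWalk E H l s.dst y := Iff.rfl

lemma isWalk_append {l₁ l₂ : List (Step V)} {x m y : V}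
    (h₁ : IsWalk E H l₁ x m) (h₂ : IsWalk E H l₂ m y) : IsWalk E H (l₁ ++ l₂) x y := by
  induction l₁ generalizing x with
  | nil => have hx : x = m := h₁; subst hx; exact h₂
  | cons s l ih =>
    obtain ⟨h0, hv, hw⟩ := h₁
    exact ⟨h0, hv, ih hw⟩

lemma isWalk_append_split {l₁ l₂ : List (Step V)} {x y : V}
    (h : IsWalk E H (l₁ ++ l₂) x y) : ∃ m, IsWalk E H l₁ x m ∧ IsWalk E H l₂ m y := by
  induction l₁ generalizing x with
  | nil => exact ⟨x, rfl, h⟩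
  | cons s l ih =>
    obtain ⟨h0, hv, hw⟩ := h
    obtain ⟨m, hm1, hm2⟩ := ih hw
    exact ⟨m, ⟨h0, hv, hm1⟩, hm2⟩

lemma walk_getLast_dst {l : List (Step V)} {x y : V} (h : IsWalk E H l x y) :
    ∀ s ∈ l.getLast?, s.dst = y := by
  induction l generalizing x with
  | nil => simp
  | cons s l ih =>
    obtain ⟨h0, hv, hw⟩ := h
    cases l with
    | nil =>
      intro t ht
      simp only [List.getLast?_singleton, Option.mem_some_iff] at ht
      subst ht; exact hw
    | cons t r =>
      rw [List.getLast?_cons_cons]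
      exact ih hw

lemma mem_of_getLast? {α : Type*} {l : List α} {a : α} (h : a ∈ l.getLast?) : a ∈ l := by
  obtain ⟨h', rfl⟩ := List.mem_getLast?_eq_getLast h
  exact List.getLast_mem h'

lemma chain'_of_forall {α : Type*} {R : α → α → Prop} :
    ∀ {l : List α}, (∀ a ∈ l, ∀ b ∈ l, R a b) → List.Chain' R l := by
  intro l h
  induction l with
  | nil => exact List.isChain_nil
  | cons a l ih =>
    rw [List.Chain', List.isChain_cons]
    refine ⟨fun y hy => h a (by simp) y (List.mem_cons_of_mem _ (List.mem_of_mem_head? hy)), ?_⟩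
    exact ih fun x hx y hy => h x (List.mem_cons_of_mem _ hx) y (List.mem_cons_of_mem _ hy)

lemma chain'_and {α : Type*} {P Q : α → α → Prop} :
    ∀ {l : List α}, List.Chain' P l → List.Chain' Q l →
      List.Chain' (fun a b => P a b ∧ Q a b) l := by
  intro l hP hQ
  induction l with
  | nil => exact List.isChain_nil
  | cons a l ih =>
    rw [List.Chain', List.isChain_cons] at *
    exact ⟨fun y hy => ⟨hP.1 y hy, hQ.1 y hy⟩, ih hP.2 hQ.2⟩

lemma dOpen_iff_chain' : ∀ {l : List (Step V)},
    DInteriorOpen E Z l ↔ List.Chain' (DCond E Z) l := by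
  intro l
  induction l with
  | nil => simp [DInteriorOpen, List.Chain', List.isChain_nil]
  | cons s l ih =>
    cases l with
    | nil => simp [DInteriorOpen, List.Chain', List.isChain_singleton]
    | cons t r =>
      rw [List.Chain', List.isChain_cons_cons]
      constructor
      · rintro ⟨h1, h2, h3⟩; exact ⟨⟨h1, h2⟩, ih.mp h3⟩
      · rintro ⟨⟨h1, h2⟩, h3⟩; exact ⟨h1, h2, ih.mpr h3⟩

lemma anc_step {S : Set V} {a b : V} (h : E a b) (hb : b ∈ AncSet E S) : a ∈ AncSet E S := by
  obtain ⟨z, hz, hr⟩ := hb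
  exact ⟨z, hz, Relation.ReflTransGen.head h hr⟩

lemma mem_ancSet_self {S : Set V} {v : V} (h : v ∈ S) : v ∈ AncSet E S :=
  ⟨v, h, Relation.ReflTransGen.refl⟩

lemma ancZ_subset : AncSet E Z ⊆ AncSet E (X ∪ Y ∪ Z) := by
  rintro v ⟨z, hz, hr⟩
  exact ⟨z, Or.inr hz, hr⟩

lemma headAtDst_of_not {s : Step V} (h : ¬ s.HeadAtDst) : s.dir = EDir.bwd := by
  cases hd : s.dir with
  | fwd => exact absurd (Or.inl hd) h
  | bi => exact absurd (Or.inr hd) h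
  | bwd => rfl

lemma headAtSrc_of_not {s : Step V} (h : ¬ s.HeadAtSrc) : s.dir = EDir.fwd := by
  cases hd : s.dir with
  | bwd => exact absurd (Or.inl hd) h
  | bi => exact absurd (Or.inr hd) h
  | fwd => rfl

lemma not_headAtSrc_fwd {s : Step V} (h : s.dir = EDir.fwd) : ¬ s.HeadAtSrc := by
  rintro (h' | h') <;> rw [h] at h' <;> exact EDir.noConfusion h'

lemma not_headAtDst_bwd {s : Step V} (h : s.dir = EDir.bwd) : ¬ s.HeadAtDst := by
  rintro (h' | h') <;> rw [h] at h' <;> exact EDir.noConfusion h'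

end Aux
section Aux2

variable {E : V → V → Prop} {H : Set (Set V)} {X Y Z A : Set V}

open Classical in
/-- number of bad colliders along a walk. -/
noncomputable def badCount (E : V → V → Prop) (Z : Set V) : List (Step V) → ℕ
  | [] => 0
  | [_] => 0
  | s :: t :: l => (if Bad E Z s t then 1 else 0) + badCount E Z (t :: l)

open Classical in
lemma badCount_cons_cons (s t : Step V) (l : List (Step V)) :
    badCount E Z (s :: t :: l) = (if Bad E Z s t then 1 else 0) + badCount E Z (t :: l) := by
  simp [badCount]

lemma badCount_zero_chain : ∀ {l : List (Step V)}, badCount E Z l = 0 →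
    List.Chain' (fun s t => ¬ Bad E Z s t) l := by
  intro l h
  induction l with
  | nil => exact List.isChain_nil
  | cons s l ih =>
    cases l with
    | nil => exact List.isChain_singleton s
    | cons t r =>
      rw [badCount_cons_cons] at h
      have h1 : ¬ Bad E Z s t := by
        intro hb; rw [if_pos hb] at h; omega
      have h2 : badCount E Z (t :: r) = 0 := by omega
      exact List.isChain_cons_cons.mpr ⟨h1, ih h2⟩

lemma badCount_bwd_append {q : List (Step V)} :
    ∀ {p : List (Step V)}, (∀ s ∈ p, s.dir = EDir.bwd) →
      badCount E Z (p ++ q) = badCount E Z q := by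
  intro p hp
  induction p with
  | nil => rfl
  | cons a p ih =>
    have ha : a.dir = EDir.bwd := hp a (by simp)
    have hrest := ih (fun s hs => hp s (List.mem_cons_of_mem _ hs))
    cases hpq : p ++ q with
    | nil =>
      obtain ⟨hp0, hq⟩ := List.append_eq_nil_iff.mp hpq
      subst hp0; subst hq; simp [badCount]
    | cons b r =>
      rw [List.cons_append, hpq, badCount_cons_cons]
      have : ¬ Bad E Z a b := fun hb => not_headAtDst_bwd ha hb.1.1
      rw [if_neg this, ← hpq, hrest]
      omega

lemma exists_first_bad : ∀ {l : List (Step V)}, badCount E Z l ≠ 0 →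
    ∃ l₁ s t l₂, l = l₁ ++ s :: t :: l₂ ∧ Bad E Z s t ∧
      List.Chain' (fun a b => ¬ Bad E Z a b) (l₁ ++ [s]) ∧
      badCount E Z (t :: l₂) < badCount E Z l := by
  intro l h
  induction l with
  | nil => exact absurd rfl h
  | cons s l ih =>
    cases l with
    | nil => exact absurd rfl h
    | cons t r =>
      rw [badCount_cons_cons] at h
      by_cases hb : Bad E Z s t
      · refine ⟨[], s, t, r, rfl, hb, List.isChain_singleton s, ?_⟩
        rw [badCount_cons_cons, if_pos hb]; omega
      · rw [if_neg hb] at h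
        obtain ⟨l₁, s', t', l₂, heq, hbad, hnb, hlt⟩ := ih (by simpa using h)
        refine ⟨s :: l₁, s', t', l₂, by rw [List.cons_append, heq], hbad, ?_, ?_⟩
        · rw [List.cons_append, List.Chain', List.isChain_cons]
          refine ⟨?_, hnb⟩
          intro b hb'
          have hhead : (l₁ ++ [s']).head? = some t := by
            cases l₁ with
            | nil =>
              simp only [List.nil_append] at heq ⊢
              injection heq with h1 _
              rw [List.head?_cons, h1]
            | cons u l₁' =>
              rw [List.cons_append] at heq ⊢
              injection heq with h1 _
              rw [List.head?_cons, h1]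
          rw [hhead, Option.mem_some_iff] at hb'
          subst hb'
          exact hb
        · rw [badCount_cons_cons, if_neg hb]; omega

end Aux2
section Aux3

variable {E : V → V → Prop} {H : Set (Set V)} {X Y Z A : Set V}

/-- from an ancestor of `X ∪ Y ∪ Z` that is not an ancestor of `Z`, there is a
`Z`-free directed walk to a node of `X ∪ Y` (in both directions as step lists). -/
lemma escape {c : V} (hcA : c ∈ AncSet E (X ∪ Y ∪ Z)) (hcZ : c ∉ AncSet E Z) :
    ∃ τ, τ ∈ X ∪ Y ∧ τ ∉ Z ∧ ∃ lf lb : List (Step V),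
      IsWalk E H lf c τ ∧ IsWalk E H lb τ c ∧
      (∀ s ∈ lf, s.dir = EDir.fwd ∧ s.dst ∉ Z) ∧
      (∀ s ∈ lb, s.dir = EDir.bwd ∧ s.dst ∉ Z) := by
  obtain ⟨w, hw, hreach⟩ := hcA
  revert hcZ
  induction hreach using Relation.ReflTransGen.head_induction_on with
  | refl =>
    intro hcZ
    have hwZ : w ∉ Z := fun h => hcZ (mem_ancSet_self h)
    have hwXY : w ∈ X ∪ Y := by
      rcases hw with h | h
      · exact h
      · exact absurd h hwZ
    exact ⟨w, hwXY, hwZ, [], [], rfl, rfl, by simp, by simp⟩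
  | head h hr ih =>
    rename_i a c'
    intro haZ
    have hc'Z : c' ∉ AncSet E Z := by
      rintro ⟨z, hz, hrz⟩
      exact haZ ⟨z, hz, Relation.ReflTransGen.head h hrz⟩
    obtain ⟨τ, hτXY, hτZ, lf, lb, hlf, hlb, hlfc, hlbc⟩ := ih hc'Z
    have haZ' : a ∉ Z := fun hh => haZ (mem_ancSet_self hh)
    have hc'Z' : c' ∉ Z := fun hh => hc'Z (mem_ancSet_self hh)
    refine ⟨τ, hτXY, hτZ, ⟨a, EDir.fwd, c'⟩ :: lf, lb ++ [⟨c', EDir.bwd, a⟩], ?_, ?_, ?_, ?_⟩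
    · exact ⟨rfl, h, hlf⟩
    · exact isWalk_append hlb ⟨rfl, h, rfl⟩
    · intro s hs
      rcases List.mem_cons.mp hs with rfl | hs
      · exact ⟨rfl, hc'Z'⟩
      · exact hlfc s hs
    · intro s hs
      rcases List.mem_append.mp hs with hs | hs
      · exact hlbc s hs
      · rw [List.mem_singleton] at hs; subst hs; exact ⟨rfl, haZ'⟩

/-- a bidirected chain in the induced sub-HEDG gives a walk of bidirected steps. -/
lemma biChain_walk {a b : V} (h : Relation.ReflTransGen (BiRel (InducedH H A)) a b) :
    ∃ m : List (Step V), IsWalk E H m a b ∧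
      ∀ s ∈ m, s.dir = EDir.bi ∧ s.dst ∈ A ∧ s.src ∈ A := by
  induction h using Relation.ReflTransGen.head_induction_on with
  | refl => exact ⟨[], rfl, by simp⟩
  | head hbr hr ih =>
    rename_i a' c'
    obtain ⟨m, hw, hall⟩ := ih
    obtain ⟨hne, hFH, hFA⟩ : a' ≠ c' ∧ {a', c'} ∈ H ∧ ({a', c'} : Set V) ⊆ A :=
      ⟨hbr.1, hbr.2.1, hbr.2.2⟩
    refine ⟨⟨a', EDir.bi, c'⟩ :: m, ⟨rfl, ⟨hne, hFH⟩, hw⟩, ?_⟩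
    intro s hs
    rcases List.mem_cons.mp hs with rfl | hs
    · exact ⟨rfl, hFA (by simp), hFA (by simp)⟩
    · exact hall s hs

/-- both endpoints of a moral edge of the induced sub-HEDG lie in `A`. -/
lemma moral_mem {v w : V} (h : MoralE (InducedE E A) (InducedH H A) v w) :
    v ∈ A ∧ w ∈ A := by
  obtain ⟨hvw, a, b, hva, hwb, hchain⟩ := h
  constructor
  · rcases hva with rfl | hva
    · rcases Relation.ReflTransGen.cases_head hchain with rfl | ⟨c, hbr, _⟩
      · rcases hwb with rfl | hwb
        · exact absurd rfl hvw
        · exact hwb.2.1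
      · exact hbr.2.2 (by simp)
    · exact hva.1
  · rcases hwb with rfl | hwb
    · rcases Relation.ReflTransGen.cases_tail hchain with rfl | ⟨c, _, hbr⟩
      · rcases hva with rfl | hva
        · exact absurd rfl hvw
        · exact hva.2.1
      · exact hbr.2.2 (by simp)
    · exact hwb.1

end Aux3
section Aux4

variable {E : V → V → Prop} {H : Set (Set V)} {X Y Z A : Set V}

/-- strong pair condition: a collider pair whose middle node lies in `A`. -/
def SCond (A : Set V) (s t : Step V) : Prop := Collider s t ∧ s.dst ∈ A

lemma sCond_wCond {s t : Step V} (h : SCond A s t) : WCond Z A s t :=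
  ⟨fun _ => h.2, fun hc => absurd h.1 hc⟩

/-- a moral edge of the induced sub-HEDG yields a walk segment all of whose
interior pairs are colliders in `A`. -/
lemma moral_edge_segment {v w : V} (h : MoralE (InducedE E A) (InducedH H A) v w) :
    ∃ seg : List (Step V), IsWalk E H seg v w ∧ List.Chain' (SCond A) seg := by
  obtain ⟨hvw, a, b, hva, hwb, hchain⟩ := h
  obtain ⟨m, hmw, hmall⟩ := biChain_walk (E := E) hchain
  have hmS : ∀ s ∈ m, ∀ t, t.HeadAtSrc → SCond A s t := by
    intro s hs t ht
    obtain ⟨hdir, hdst, _⟩ := hmall s hs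
    exact ⟨⟨Or.inr hdir, ht⟩, hdst⟩
  have hmHS : ∀ s ∈ m, (s : Step V).HeadAtSrc := fun s hs => Or.inr (hmall s hs).1
  have hchm : List.Chain' (SCond A) m :=
    chain'_of_forall (fun s hs t ht => hmS s hs t (hmHS t ht))
  rcases hva with rfl | hva <;> rcases hwb with rfl | hwb
  · -- v = a, w = b
    exact ⟨m, hmw, hchm⟩
  · -- v = a, E' w b
    obtain ⟨hwA, hbA, hEwb⟩ := hwb
    refine ⟨m ++ [⟨b, EDir.bwd, w⟩], isWalk_append hmw (show IsWalk E H [⟨b, EDir.bwd, w⟩] b w from ⟨rfl, hEwb, rfl⟩), ?_⟩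
    rw [List.Chain', List.isChain_append]
    refine ⟨hchm, List.isChain_singleton _, ?_⟩
    intro s hs t ht
    rw [List.head?_cons, Option.mem_some_iff] at ht
    subst ht
    exact hmS s (mem_of_getLast? hs) _ (Or.inl rfl)
  · -- E' v a, w = b
    obtain ⟨hvA, haA, hEva⟩ := hva
    refine ⟨⟨v, EDir.fwd, a⟩ :: m, ⟨rfl, hEva, hmw⟩, ?_⟩
    rw [List.Chain', List.isChain_cons]
    refine ⟨?_, hchm⟩
    intro t ht
    exact ⟨⟨Or.inl rfl, hmHS t (List.mem_of_mem_head? ht)⟩, haA⟩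
  · -- E' v a, E' w b
    obtain ⟨hvA, haA, hEva⟩ := hva
    obtain ⟨hwA, hbA, hEwb⟩ := hwb
    refine ⟨⟨v, EDir.fwd, a⟩ :: (m ++ [⟨b, EDir.bwd, w⟩]),
      ⟨rfl, hEva, isWalk_append hmw (show IsWalk E H [⟨b, EDir.bwd, w⟩] b w from ⟨rfl, hEwb, rfl⟩)⟩, ?_⟩
    rw [List.Chain', List.isChain_cons]
    constructor
    · intro t ht
      have htm : t ∈ m ++ [⟨b, EDir.bwd, w⟩] := List.mem_of_mem_head? ht
      have htHS : t.HeadAtSrc := by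
        rcases List.mem_append.mp htm with h' | h'
        · exact hmHS t h'
        · rw [List.mem_singleton] at h'; subst h'; exact Or.inl rfl
      exact ⟨⟨Or.inl rfl, htHS⟩, haA⟩
    · rw [List.isChain_append]
      refine ⟨hchm, List.isChain_singleton _, ?_⟩
      intro s hs t ht
      rw [List.head?_cons, Option.mem_some_iff] at ht
      subst ht
      exact hmS s (mem_of_getLast? hs) _ (Or.inl rfl)

/-- a `Z`-avoiding path in the moral graph of the ancestral closure gives a
weakly open walk. -/
lemma moral_path_to_walk {x y : V}
    (hpath : Relation.ReflTransGen
      (fun a b => MoralE (InducedE E (AncSet E (X ∪ Y ∪ Z)))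
        (InducedH H (AncSet E (X ∪ Y ∪ Z))) a b ∧ b ∉ Z) x y)
    (hxZ : x ∉ Z) :
    y ∉ Z ∧ ∃ l, IsWalk E H l x y ∧ List.Chain' (WCond Z (AncSet E (X ∪ Y ∪ Z))) l := by
  induction hpath with
  | refl => exact ⟨hxZ, [], rfl, List.isChain_nil⟩
  | tail hxb hby ih =>
    rename_i b y'
    obtain ⟨hbZ, l₁, hw₁, hc₁⟩ := ih
    obtain ⟨hM, hyZ⟩ := hby
    obtain ⟨seg, hsw, hsc⟩ := moral_edge_segment (E := E) (H := H) hM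
    have hbA : b ∈ AncSet E (X ∪ Y ∪ Z) := (moral_mem hM).1
    refine ⟨hyZ, l₁ ++ seg, isWalk_append hw₁ hsw, ?_⟩
    rw [List.Chain', List.isChain_append]
    refine ⟨hc₁, hsc.imp (fun _ _ => sCond_wCond), ?_⟩
    intro s hs t ht
    have hsd : s.dst = b := walk_getLast_dst hw₁ s hs
    exact ⟨fun _ => hsd ▸ hbA, fun _ => hsd ▸ hbZ⟩


end Aux4
section Aux5

variable {E : V → V → Prop} {H : Set (Set V)} {X Y Z : Set V}

lemma wcond_notbad_dcond {A : Set V} {s t : Step V}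
    (hw : WCond Z A s t) (hn : ¬ Bad E Z s t) : DCond E Z s t :=
  ⟨fun hc => by_contra fun hna => hn ⟨hc, hna⟩, hw.2⟩

lemma chain_dcond_of {A : Set V} {l : List (Step V)}
    (hw : List.Chain' (WCond Z A) l) (hn : List.Chain' (fun s t => ¬ Bad E Z s t) l) :
    List.Chain' (DCond E Z) l :=
  (chain'_and hw hn).imp (fun _ _ h => wcond_notbad_dcond h.1 h.2)

/-- repairing a weakly open walk into a d-open walk (with possibly new endpoints). -/
lemma fix_walk : ∀ n : ℕ, ∀ l : List (Step V), ∀ x y : V, x ∈ X → y ∈ Y → x ∉ Z → y ∉ Z →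
    IsWalk E H l x y → List.Chain' (WCond Z (AncSet E (X ∪ Y ∪ Z))) l →
    badCount E Z l ≤ n →
    ∃ x' y' l', x' ∈ X ∧ y' ∈ Y ∧ x' ∉ Z ∧ y' ∉ Z ∧ IsWalk E H l' x' y' ∧
      List.Chain' (DCond E Z) l' := by
  intro n
  induction n with
  | zero =>
    intro l x y hx hy hxZ hyZ hwalk hchain hbc
    exact ⟨x, y, l, hx, hy, hxZ, hyZ, hwalk,
      chain_dcond_of hchain (badCount_zero_chain (Nat.le_zero.mp hbc))⟩
  | succ n ih =>
    intro l x y hx hy hxZ hyZ hwalk hchain hbc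
    by_cases h0 : badCount E Z l = 0
    · exact ⟨x, y, l, hx, hy, hxZ, hyZ, hwalk, chain_dcond_of hchain (badCount_zero_chain h0)⟩
    obtain ⟨l₁, s, t, l₂, heq, hbad, hnb, hlt⟩ := exists_first_bad h0
    subst heq
    obtain ⟨m₁, hw₁, hw₂⟩ := isWalk_append_split hwalk
    obtain ⟨hssrc, hsval, hw₃⟩ := hw₂
    rw [List.Chain', List.isChain_append] at hchain
    obtain ⟨hc₁, hc₂, hcross⟩ := hchain
    have hWst : WCond Z (AncSet E (X ∪ Y ∪ Z)) s t := (List.isChain_cons_cons.mp hc₂).1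
    have hcA : s.dst ∈ AncSet E (X ∪ Y ∪ Z) := hWst.1 hbad.1
    have hcAnc : s.dst ∉ AncSet E Z := hbad.2
    have hcZ : s.dst ∉ Z := fun h => hcAnc (mem_ancSet_self h)
    obtain ⟨τ, hτXY, hτZ, lf, lb, hlf, hlb, hlfc, hlbc⟩ := escape (E := E) (H := H) hcA hcAnc
    rcases hτXY with hτX | hτY
    · -- the escape ends in `X`: prepend the reversed escape path and recurse
      have hwalk' : IsWalk E H (lb ++ t :: l₂) τ y := isWalk_append hlb hw₃
      have hlbW : ∀ a ∈ lb, ∀ b : Step V, WCond Z (AncSet E (X ∪ Y ∪ Z)) a b := by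
        intro a ha b
        exact ⟨fun hcol => absurd hcol.1 (not_headAtDst_bwd (hlbc a ha).1),
          fun _ => (hlbc a ha).2⟩
      have hchain' : List.Chain' (WCond Z (AncSet E (X ∪ Y ∪ Z))) (lb ++ t :: l₂) := by
        rw [List.Chain', List.isChain_append]
        exact ⟨chain'_of_forall (fun a ha b _ => hlbW a ha b), hc₂.tail,
          fun a ha b _ => hlbW a (mem_of_getLast? ha) b⟩
      have hbc' : badCount E Z (lb ++ t :: l₂) ≤ n := by
        rw [badCount_bwd_append (fun u hu => (hlbc u hu).1)]
        omega
      exact ih (lb ++ t :: l₂) τ y hτX hy hτZ hyZ hwalk' hchain' hbc'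
    · -- the escape ends in `Y`: truncate the walk and append the escape path
      have hwalk' : IsWalk E H ((l₁ ++ [s]) ++ lf) x τ :=
        isWalk_append (isWalk_append hw₁
          (show IsWalk E H [s] m₁ s.dst from ⟨hssrc, hsval, rfl⟩)) hlf
      have hWC : List.Chain' (WCond Z (AncSet E (X ∪ Y ∪ Z))) (l₁ ++ [s]) := by
        rw [List.Chain', List.isChain_append]
        refine ⟨hc₁, List.isChain_singleton _, ?_⟩
        intro a ha b hb
        rw [List.head?_cons, Option.mem_some_iff] at hb
        subst hb
        exact hcross a ha s rfl
      have hchain' : List.Chain' (DCond E Z) ((l₁ ++ [s]) ++ lf) := by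
        rw [List.Chain', List.isChain_append]
        refine ⟨chain_dcond_of hWC hnb, ?_, ?_⟩
        · refine chain'_of_forall fun a ha b hb => ?_
          exact ⟨fun hcol => absurd hcol.2 (not_headAtSrc_fwd (hlfc b hb).1),
            fun _ => (hlfc a ha).2⟩
        · intro a ha b hb
          have has : a = s := by
            rw [List.getLast?_append_cons, List.getLast?_singleton,
              Option.mem_some_iff] at ha
            exact ha.symm
          subst has
          exact ⟨fun hcol =>
              absurd hcol.2 (not_headAtSrc_fwd (hlfc b (List.mem_of_mem_head? hb)).1),
            fun _ => hcZ⟩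
      exact ⟨x, τ, (l₁ ++ [s]) ++ lf, hx, hτY, hxZ, hτZ, hwalk', hchain'⟩

end Aux5
section Aux6

variable {E : V → V → Prop} {H : Set (Set V)} {X Y Z : Set V}

lemma valid_fwd {s : Step V} (h : s.Valid E H) (hd : s.dir = EDir.fwd) :
    E s.src s.dst := by
  unfold Step.Valid at h; rw [hd] at h; exact h

lemma valid_bwd {s : Step V} (h : s.Valid E H) (hd : s.dir = EDir.bwd) :
    E s.dst s.src := by
  unfold Step.Valid at h; rw [hd] at h; exact h

lemma valid_bi {s : Step V} (h : s.Valid E H) (hd : s.dir = EDir.bi) :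
    s.src ≠ s.dst ∧ ({s.src, s.dst} : Set V) ∈ H := by
  unfold Step.Valid at h; rw [hd] at h; exact h

lemma fwd_chase {y : V} (hyA : y ∈ AncSet E (X ∪ Y ∪ Z)) :
    ∀ l : List (Step V), ∀ v, IsWalk E H l v y → List.Chain' (DCond E Z) l →
      (∀ s ∈ l.head?, (s : Step V).dir = EDir.fwd) → v ∈ AncSet E (X ∪ Y ∪ Z) := by
  intro l
  induction l with
  | nil => intro v h _ _; exact (show v = y from h) ▸ hyA
  | cons s l ih =>
    intro v hw hc hh
    obtain ⟨hsrc, hval, hrest⟩ := hw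
    have hsf : s.dir = EDir.fwd := hh s rfl
    have hE : E v s.dst := hsrc ▸ valid_fwd hval hsf
    have hdst : s.dst ∈ AncSet E (X ∪ Y ∪ Z) := by
      cases l with
      | nil => exact (show s.dst = y from hrest) ▸ hyA
      | cons t r =>
        have hDC := (List.isChain_cons_cons.mp hc).1
        by_cases hcol : Collider s t
        · exact ancZ_subset (hDC.1 hcol)
        · have hnt : ¬ t.HeadAtSrc := fun h' => hcol ⟨Or.inl hsf, h'⟩
          exact ih s.dst hrest hc.tail
            (fun u hu => by
              rw [List.head?_cons, Option.mem_some_iff] at hu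
              subst hu; exact headAtSrc_of_not hnt)
    exact anc_step hE hdst

lemma walk_all_anc {y : V} (hyA : y ∈ AncSet E (X ∪ Y ∪ Z)) :
    ∀ l : List (Step V), ∀ v, IsWalk E H l v y → List.Chain' (DCond E Z) l →
      v ∈ AncSet E (X ∪ Y ∪ Z) → ∀ s ∈ l, (s : Step V).dst ∈ AncSet E (X ∪ Y ∪ Z) := by
  intro l
  induction l with
  | nil => intro v _ _ _ s hs; exact absurd hs List.not_mem_nil
  | cons s l ih =>
    intro v hw hc hvA u hu
    obtain ⟨hsrc, hval, hrest⟩ := hw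
    have hdst : s.dst ∈ AncSet E (X ∪ Y ∪ Z) := by
      cases l with
      | nil => exact (show s.dst = y from hrest) ▸ hyA
      | cons t r =>
        have hDC := (List.isChain_cons_cons.mp hc).1
        by_cases hcol : Collider s t
        · exact ancZ_subset (hDC.1 hcol)
        · by_cases hhd : s.HeadAtDst
          · have hnt : ¬ t.HeadAtSrc := fun h' => hcol ⟨hhd, h'⟩
            exact fwd_chase hyA (t :: r) s.dst hrest hc.tail
              (fun u' hu' => by
                rw [List.head?_cons, Option.mem_some_iff] at hu'
                subst hu'; exact headAtSrc_of_not hnt)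
          · have hE : E s.dst v := hsrc ▸ valid_bwd hval (headAtDst_of_not hhd)
            exact anc_step hE hvA
    rcases List.mem_cons.mp hu with rfl | hu
    · exact hdst
    · exact ih s.dst hrest hc.tail hdst u hu

end Aux6
section Aux7

variable {E : V → V → Prop} {H : Set (Set V)} {X Y Z : Set V}

/-- the moral edge relation, avoiding `Z`. -/
def MZ (E : V → V → Prop) (H : Set (Set V)) (X Y Z : Set V) : V → V → Prop :=
  fun a b => MoralE (InducedE E (AncSet E (X ∪ Y ∪ Z)))
    (InducedH H (AncSet E (X ∪ Y ∪ Z))) a b ∧ b ∉ Z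

lemma walk_to_moral_aux {y : V} (hyZ : y ∉ Z) :
    ∀ l : List (Step V),
      (∀ v, IsWalk E H l v y → List.Chain' (DCond E Z) l →
        (∀ s ∈ l, (s : Step V).dst ∈ AncSet E (X ∪ Y ∪ Z)) →
        v ∈ AncSet E (X ∪ Y ∪ Z) → v ∉ Z →
        Relation.ReflTransGen (MZ E H X Y Z) v y)
      ∧
      (∀ (p : Step V) (v a : V), IsWalk E H l p.dst y →
        List.Chain' (DCond E Z) (p :: l) →
        (∀ s ∈ l, (s : Step V).dst ∈ AncSet E (X ∪ Y ∪ Z)) →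
        p.dst ∈ AncSet E (X ∪ Y ∪ Z) → p.HeadAtDst →
        Relation.ReflTransGen (BiRel (InducedH H (AncSet E (X ∪ Y ∪ Z)))) a p.dst →
        (v = a ∨ InducedE E (AncSet E (X ∪ Y ∪ Z)) v a) → v ∉ Z →
        Relation.ReflTransGen (MZ E H X Y Z) v y) := by
  intro l
  induction l with
  | nil =>
    constructor
    · intro v hwalk _ _ _ _
      exact (show v = y from hwalk) ▸ Relation.ReflTransGen.refl
    · intro p v a hwalk _ _ _ _ hbichain hva hvZ
      have hpy : p.dst = y := hwalk
      by_cases hvy : v = y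
      · exact hvy ▸ Relation.ReflTransGen.refl
      · exact Relation.ReflTransGen.single
          ⟨⟨hvy, a, p.dst, hva, Or.inl hpy.symm, hbichain⟩, hyZ⟩
  | cons s l ih =>
    constructor
    · -- ΦW
      intro v hwalk hchain hall hvA hvZ
      obtain ⟨hsrc, hval, hrest⟩ := hwalk
      have hdA : s.dst ∈ AncSet E (X ∪ Y ∪ Z) := hall s (by simp)
      have hall' : ∀ u ∈ l, (u : Step V).dst ∈ AncSet E (X ∪ Y ∪ Z) :=
        fun u hu => hall u (List.mem_cons_of_mem _ hu)
      cases hd : s.dir with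
      | bwd =>
        have hE : E s.dst v := hsrc ▸ valid_bwd hval hd
        have hnZ : s.dst ∉ Z := by
          cases l with
          | nil => rw [show s.dst = y from hrest]; exact hyZ
          | cons t r =>
            exact ((List.isChain_cons_cons.mp hchain).1).2
              (fun hcol => not_headAtDst_bwd hd hcol.1)
        have hrec := (ih.1) s.dst hrest hchain.tail hall' hdA hnZ
        by_cases hvw : v = s.dst
        · exact hvw ▸ hrec
        · exact Relation.ReflTransGen.head
            ⟨⟨hvw, v, v, Or.inl rfl, Or.inr ⟨hdA, hvA, hE⟩, Relation.ReflTransGen.refl⟩,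
              hnZ⟩ hrec
      | fwd =>
        have hE : E v s.dst := hsrc ▸ valid_fwd hval hd
        exact (ih.2) s v s.dst hrest hchain hall' hdA (Or.inl hd)
          Relation.ReflTransGen.refl (Or.inr ⟨hvA, hdA, hE⟩) hvZ
      | bi =>
        obtain ⟨hne, hFH⟩ := valid_bi hval hd
        have hbr : BiRel (InducedH H (AncSet E (X ∪ Y ∪ Z))) v s.dst := by
          refine ⟨hsrc ▸ hne, hsrc ▸ hFH, ?_⟩
          intro z hz
          rcases hz with rfl | hz
          · exact hvA
          · rw [Set.mem_singleton_iff] at hz; subst hz; exact hdA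
        exact (ih.2) s v v hrest hchain hall' hdA (Or.inr hd)
          (Relation.ReflTransGen.single hbr) (Or.inl rfl) hvZ
    · -- ΦB
      intro p v a hwalk hchain hall hpA hpHD hbichain hva hvZ
      obtain ⟨hsrc, hval, hrest⟩ := hwalk
      have hchain' : List.Chain' (DCond E Z) (s :: l) := hchain.tail
      have hdA : s.dst ∈ AncSet E (X ∪ Y ∪ Z) := hall s (by simp)
      have hall' : ∀ u ∈ l, (u : Step V).dst ∈ AncSet E (X ∪ Y ∪ Z) :=
        fun u hu => hall u (List.mem_cons_of_mem _ hu)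
      cases hd : s.dir with
      | bi =>
        obtain ⟨hne, hFH⟩ := valid_bi hval hd
        have hbr : BiRel (InducedH H (AncSet E (X ∪ Y ∪ Z))) p.dst s.dst := by
          refine ⟨hsrc ▸ hne, hsrc ▸ hFH, ?_⟩
          intro z hz
          rcases hz with rfl | hz
          · exact hpA
          · rw [Set.mem_singleton_iff] at hz; subst hz; exact hdA
        exact (ih.2) s v a hrest hchain' hall' hdA (Or.inr hd)
          (hbichain.tail hbr) hva hvZ
      | bwd =>
        have hE : E s.dst p.dst := hsrc ▸ valid_bwd hval hd
        have hnZ : s.dst ∉ Z := by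
          cases l with
          | nil => rw [show s.dst = y from hrest]; exact hyZ
          | cons t r =>
            exact ((List.isChain_cons_cons.mp hchain').1).2
              (fun hcol => not_headAtDst_bwd hd hcol.1)
        have hrec := (ih.1) s.dst hrest hchain'.tail hall' hdA hnZ
        by_cases hvw : v = s.dst
        · exact hvw ▸ hrec
        · exact Relation.ReflTransGen.head
            ⟨⟨hvw, a, p.dst, hva, Or.inr ⟨hdA, hpA, hE⟩, hbichain⟩, hnZ⟩ hrec
      | fwd =>
        have hDC : DCond E Z p s := (List.isChain_cons_cons.mp hchain).1
        have hnZ : p.dst ∉ Z := hDC.2 (fun hcol => not_headAtSrc_fwd hd hcol.2)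
        have hE : E p.dst s.dst := hsrc ▸ valid_fwd hval hd
        have hrec := (ih.2) s p.dst s.dst hrest hchain' hall' hdA (Or.inl hd)
          Relation.ReflTransGen.refl (Or.inr ⟨hpA, hdA, hE⟩) hnZ
        by_cases hvw : v = p.dst
        · exact hvw ▸ hrec
        · exact Relation.ReflTransGen.head
            ⟨⟨hvw, a, p.dst, hva, Or.inl rfl, hbichain⟩, hnZ⟩ hrec

end Aux7
/-- For any HEDG `G` and subsets `X, Y, Z`: `X ⟂_G^d Y | Z` iff `X` is
separated from `Y` given `Z` in the (generalized) moralization of the ancestral closure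
`Anc^G(X ∪ Y ∪ Z)` (with its induced sub-HEDG structure). -/
theorem dSep_iff_sep_moral_ancestral_closure {V : Type*} [Fintype V]
    (E : V → V → Prop) (H : Set (Set V)) (hH : IsSimplicial H) (X Y Z : Set V) :
    DSep E H X Y Z ↔
      USep (MoralE (InducedE E (AncSet E (X ∪ Y ∪ Z)))
        (InducedH H (AncSet E (X ∪ Y ∪ Z)))) X Y Z := by
  constructor
  · -- d-separation implies separation in the moralization
    intro hD x hx y hy hcontra
    obtain ⟨hxZ, hpath⟩ := hcontra
    obtain ⟨hyZ, l, hw, hc⟩ := moral_path_to_walk (E := E) (H := H) hpath hxZ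
    obtain ⟨x', y', l', hx', hy', hx'Z, hy'Z, hw', hc'⟩ :=
      fix_walk (badCount E Z l) l x y hx hy hxZ hyZ hw hc le_rfl
    exact hD x' hx' y' hy' l' hw' ⟨hx'Z, hy'Z, dOpen_iff_chain'.mpr hc'⟩
  · -- separation in the moralization implies d-separation
    intro hU x hx y hy l hw hcontra
    obtain ⟨hxZ, hyZ, hopen⟩ := hcontra
    have hc := dOpen_iff_chain'.mp hopen
    have hxA : x ∈ AncSet E (X ∪ Y ∪ Z) := mem_ancSet_self (Or.inl (Or.inl hx))
    have hyA : y ∈ AncSet E (X ∪ Y ∪ Z) := mem_ancSet_self (Or.inl (Or.inr hy))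
    have hall := walk_all_anc hyA l x hw hc hxA
    have hpath := (walk_to_moral_aux hyZ l).1 x hw hc hall hxA hxZ
    exact hU x hx y hy ⟨hxZ, hpath⟩

end HedgPaper
end
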